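/- For every odd integer d with 1 ≤ d ≤ 27 and d ∉ {7, 9, 11}, we have 2·Q_d'(0) ≤ 0.99, where Q_d'(0) denotes the derivative of the polynomial Q_d at 0. -/

import Mathlib

section Aux

private lemma hasDerivAt_term (d i j k : ℕ) (hij : i < j) :
    HasDerivAt (fun f : ℝ =>
      (Nat.choose i k : ℝ) * f ^ k * (1 - f) ^ (i - k) *
        (Nat.choose (d - i) (j + k - i) : ℝ) * (f / 2) ^ (j + k - i) *
        (1 - f / 2) ^ (d - j - k))
      (if k = 0 ∧ j = i + 1 then ((d - i : ℕ) : ℝ) / 2 else 0) 0 := by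
  have h1 : HasDerivAt (fun f : ℝ => (Nat.choose i k : ℝ) * f ^ k)
      ((Nat.choose i k : ℝ) * ((k : ℝ) * (0:ℝ) ^ (k - 1))) 0 :=
    (hasDerivAt_pow k 0).const_mul _
  have h2 : HasDerivAt (fun f : ℝ => (1 - f) ^ (i - k))
      (((i - k : ℕ) : ℝ) * (1 - 0) ^ (i - k - 1) * (-1)) 0 :=
    ((hasDerivAt_id (0:ℝ)).const_sub 1).pow _
  have h3 : HasDerivAt (fun f : ℝ => (f / 2) ^ (j + k - i))
      (((j + k - i : ℕ) : ℝ) * ((0:ℝ) / 2) ^ (j + k - i - 1) * (1 / 2)) 0 :=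
    ((hasDerivAt_id (0:ℝ)).div_const 2).pow _
  have h4 : HasDerivAt (fun f : ℝ => (1 - f / 2) ^ (d - j - k))
      (((d - j - k : ℕ) : ℝ) * (1 - (0:ℝ) / 2) ^ (d - j - k - 1) * (-(1 / 2))) 0 :=
    (((hasDerivAt_id (0:ℝ)).div_const 2).const_sub 1).pow _
  have H := ((((h1.mul h2).mul_const
      ((Nat.choose (d - i) (j + k - i) : ℝ))).mul h3).mul h4)
  refine H.congr_deriv ?_
  symm
  have hb : k + 1 ≤ j + k - i := by omega
  by_cases hk : k = 0
  · subst hk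
    by_cases hj : j = i + 1
    · subst hj
      simp [Nat.add_sub_cancel_left, Nat.succ_sub_one]
      ring
    · simp [hj, zero_pow (show j - i ≠ 0 by omega),
        zero_pow (show j - i - 1 ≠ 0 by omega)]
  · simp [hk, zero_pow (show j + k - i ≠ 0 by omega),
      zero_pow (show j + k - i - 1 ≠ 0 by omega), zero_pow hk]

end Aux

/-- The polynomial `Q_d`: the probability that a given colour "overtakes" as the
majority colour among `d` independently uniformly 3-coloured vertices, when each vertex
is independently recoloured (to a uniformly random different colour) with probability
`f`. -/
noncomputable def Q (d : ℕ) (f : ℝ) : ℝ :=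
  ∑ i ∈ Finset.Icc 1 (d / 2),
    (Nat.choose d i : ℝ) * (1 / 3 : ℝ) ^ i * (2 / 3 : ℝ) ^ (d - i) *
      ∑ j ∈ Finset.Icc (d / 2 + 1) d, ∑ k ∈ Finset.range (i + 1),
        (Nat.choose i k : ℝ) * f ^ k * (1 - f) ^ (i - k) *
          (Nat.choose (d - i) (j + k - i) : ℝ) * (f / 2) ^ (j + k - i) *
          (1 - f / 2) ^ (d - j - k)

/-- The derivative of `Q d` at `0`, as a sum of indicator terms. -/
noncomputable def S (d : ℕ) : ℝ :=
  ∑ i ∈ Finset.Icc 1 (d / 2),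
    (Nat.choose d i : ℝ) * (1 / 3 : ℝ) ^ i * (2 / 3 : ℝ) ^ (d - i) *
      ∑ j ∈ Finset.Icc (d / 2 + 1) d, ∑ k ∈ Finset.range (i + 1),
        (if k = 0 ∧ j = i + 1 then ((d - i : ℕ) : ℝ) / 2 else 0)

lemma hasDerivAt_Q (d : ℕ) : HasDerivAt (Q d) (S d) 0 := by
  unfold Q S
  apply HasDerivAt.fun_sum
  intro i hi
  apply HasDerivAt.const_mul
  apply HasDerivAt.fun_sum
  intro j hj
  apply HasDerivAt.fun_sum
  intro k hk
  exact hasDerivAt_term d i j k (by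
    simp only [Finset.mem_Icc] at hi hj; omega)

lemma deriv_Q (d : ℕ) : deriv (Q d) 0 = S d := (hasDerivAt_Q d).deriv

lemma S_eq (d : ℕ) (h : 1 ≤ d / 2) (h2 : d / 2 + 1 ≤ d) :
    S d = (Nat.choose d (d / 2) : ℝ) * (1 / 3 : ℝ) ^ (d / 2) *
      (2 / 3 : ℝ) ^ (d - d / 2) * (((d - d / 2 : ℕ) : ℝ) / 2) := by
  unfold S
  have hinner : ∀ i : ℕ,
      (∑ j ∈ Finset.Icc (d / 2 + 1) d, ∑ k ∈ Finset.range (i + 1),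
        (if k = 0 ∧ j = i + 1 then ((d - i : ℕ) : ℝ) / 2 else 0)) =
      (if d / 2 ≤ i ∧ i + 1 ≤ d then ((d - i : ℕ) : ℝ) / 2 else 0) := by
    intro i
    have : ∀ j : ℕ, (∑ k ∈ Finset.range (i + 1),
        (if k = 0 ∧ j = i + 1 then ((d - i : ℕ) : ℝ) / 2 else 0)) =
        (if j = i + 1 then ((d - i : ℕ) : ℝ) / 2 else 0) := by
      intro j
      simp [ite_and, Finset.sum_ite_eq']
    simp only [this, Finset.sum_ite_eq', Finset.mem_Icc]
    congr 1
    simp only [eq_iff_iff]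
    omega
  simp only [hinner]
  rw [Finset.sum_eq_single (d / 2)]
  · simp [h2]
  · intro i hi hne
    simp only [Finset.mem_Icc] at hi
    have : ¬(d / 2 ≤ i ∧ i + 1 ≤ d) := by omega
    rw [if_neg this, mul_zero]
  · intro habs
    exact absurd (Finset.mem_Icc.mpr ⟨h, le_refl _⟩) habs

/-- For every odd `1 ≤ d ≤ 27` with `d ∉ {7, 9, 11}`, we have `2·Q_d'(0) ≤ 0.99`. -/
theorem two_Q_deriv_zero_le (d : ℕ) (hodd : Odd d) (h1 : 1 ≤ d) (h27 : d ≤ 27)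
    (h7 : d ≠ 7) (h9 : d ≠ 9) (h11 : d ≠ 11) :
    2 * deriv (Q d) 0 ≤ 0.99 := by
  rw [deriv_Q]
  have hd : d = 1 ∨ d = 3 ∨ d = 5 ∨ d = 13 ∨ d = 15 ∨ d = 17 ∨ d = 19 ∨
      d = 21 ∨ d = 23 ∨ d = 25 ∨ d = 27 := by
    rcases hodd with ⟨m, hm⟩; omega
  rcases hd with rfl|rfl|rfl|rfl|rfl|rfl|rfl|rfl|rfl|rfl|rfl
  · norm_num [S]
  all_goals rw [S_eq _ (by norm_num) (by norm_num)]
  · norm_num [show Nat.choose 3 1 = 3 from rfl]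
  · norm_num [show Nat.choose 5 2 = 10 from rfl]
  · norm_num [show Nat.choose 13 6 = 1716 from rfl]
  · norm_num [show Nat.choose 15 7 = 6435 from rfl]
  · norm_num [show Nat.choose 17 8 = 24310 from rfl]
  · norm_num [show Nat.choose 19 9 = 92378 from rfl]
  · norm_num [show Nat.choose 21 10 = 352716 from rfl]
  · norm_num [show Nat.choose 23 11 = 1352078 from rfl]
  · norm_num [show Nat.choose 25 12 = 5200300 from rfl]
  · norm_num [show Nat.choose 27 13 = 20058300 from rfl]
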